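/- Let A ∈ ℂ^{n×m} be nonzero with Gram matrix G = A*A, largest singular value σ_1, and let P be the orthogonal projector onto the span of the top k eigenvectors of G, with P_⊥ = I − P. Fix a column index c with P e_c ≠ 0 and A e_c ≠ 0, and set g = P e_c / ‖P e_c‖₂. For each row index i with A_{ic} ≠ 0, let A^{(1)}(i,c) = A − (1/A_{ic}) A e_c e_i^T A and G^{(1)}(i,c) = A^{(1)}(i,c)* A^{(1)}(i,c). Then Σ_{i: A_{ic} ≠ 0} (|A_{ic}|²/‖A e_c‖₂²) · g* G^{(1)}(i,c) g ≤ 2 σ_1² · ‖A P_⊥ e_c‖₂² / ‖A e_c‖₂². -/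

import Mathlib

open Matrix Finset

private lemma conj_mul_self' (z : ℂ) : (starRingEnd ℂ) z * z = ((‖z‖^2 : ℝ) : ℂ) := by
  rw [Complex.conj_mul']; push_cast; ring

private lemma star_dot_self {n : ℕ} (w : Fin n → ℂ) :
    dotProduct (star w) w = ((∑ j, ‖w j‖^2 : ℝ) : ℂ) := by
  rw [show ((∑ j, ‖w j‖^2 : ℝ) : ℂ) = ∑ j, ((‖w j‖^2 : ℝ) : ℂ) by push_cast; rfl]
  exact Finset.sum_congr rfl fun j _ => by
    rw [Pi.star_apply, Complex.star_def, conj_mul_self']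

private lemma gram_dot {n m : ℕ} (M : Matrix (Fin n) (Fin m) ℂ) (u w : Fin m → ℂ) :
    dotProduct (star u) ((Mᴴ * M).mulVec w)
      = dotProduct (star (M.mulVec u)) (M.mulVec w) := by
  rw [← Matrix.mulVec_mulVec, Matrix.dotProduct_mulVec, ← Matrix.star_mulVec]

private lemma stdBasis_mulVec' {n m : ℕ} (c : Fin m) (i : Fin n) (w : Fin n → ℂ) :
    (Matrix.single c i (1:ℂ)).mulVec w = Pi.single c (w i) := by
  ext r
  simp only [Matrix.mulVec, dotProduct, Matrix.single, Matrix.of_apply,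
    Pi.single_apply]
  by_cases h : c = r <;> simp [h, eq_comm]

private lemma sum_mulVec' {m : ℕ} {ι : Type*} (s : Finset ι) (f : ι → Matrix (Fin m) (Fin m) ℂ)
    (z : Fin m → ℂ) : (∑ a ∈ s, f a).mulVec z = ∑ a ∈ s, (f a).mulVec z := by
  ext j
  simp only [Matrix.mulVec, dotProduct, Finset.sum_apply, Matrix.sum_apply,
    Finset.sum_mul]
  exact Finset.sum_comm

private lemma mulVec_sumv {n m : ℕ} {ι : Type*} (M : Matrix (Fin n) (Fin m) ℂ) (s : Finset ι)
    (f : ι → (Fin m → ℂ)) : M.mulVec (∑ a ∈ s, f a) = ∑ a ∈ s, M.mulVec (f a) := by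
  have := map_sum (Matrix.mulVecLin M) f s
  simpa only [Matrix.mulVecLin_apply] using this

private lemma vecMulVec_mulVec' {m : ℕ} (w u z : Fin m → ℂ) :
    (Matrix.vecMulVec w u).mulVec z = (dotProduct u z) • w := by
  ext i
  simp only [Matrix.mulVec, dotProduct, Matrix.vecMulVec_apply, Pi.smul_apply,
    smul_eq_mul, Finset.sum_mul]
  exact Finset.sum_congr rfl fun j _ => by ring

private lemma sum_dot {m : ℕ} {ι : Type*} (s : Finset ι) (f : ι → (Fin m → ℂ)) (w : Fin m → ℂ) :
    dotProduct (∑ a ∈ s, f a) w = ∑ a ∈ s, dotProduct (f a) w := by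
  simp only [dotProduct, Finset.sum_apply, Finset.sum_mul]
  exact Finset.sum_comm

private lemma dot_sum' {m : ℕ} {ι : Type*} (s : Finset ι) (w : Fin m → ℂ) (f : ι → (Fin m → ℂ)) :
    dotProduct w (∑ a ∈ s, f a) = ∑ a ∈ s, dotProduct w (f a) := by
  simp only [dotProduct, Finset.sum_apply, Finset.mul_sum]
  exact Finset.sum_comm

private lemma expand_dot {m : ℕ} (v : Fin m → Fin m → ℂ)
    (hvv : ∀ a b, dotProduct (star (v a)) (v b) = if a = b then 1 else 0)
    (s : Finset (Fin m)) (f h : Fin m → ℂ) :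
    dotProduct (star (∑ a ∈ s, f a • v a)) (∑ b ∈ s, h b • v b)
      = ∑ a ∈ s, (starRingEnd ℂ) (f a) * h a := by
  rw [star_sum]
  rw [show (∑ x ∈ s, star (f x • v x)) = ∑ x ∈ s, (starRingEnd ℂ) (f x) • star (v x) from
    Finset.sum_congr rfl fun a _ => by ext t; simp [Complex.star_def]]
  rw [sum_dot]
  refine Finset.sum_congr rfl fun a ha => ?_
  rw [smul_dotProduct, dot_sum']
  have hib : ∀ b ∈ s, dotProduct (star (v a)) (h b • v b)
      = if a = b then h b else 0 := by
    intro b _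
    rw [dotProduct_smul, hvv a b]
    by_cases hab : a = b <;> simp [hab]
  rw [Finset.sum_congr rfl hib, Finset.sum_ite_eq s a, if_pos ha, smul_eq_mul]

private lemma rplu_arith (α S Xr s Sf σ1 : ℝ) (hS0 : 0 < S) (hXr0 : 0 < Xr)
    (hs2 : s^2 = S) (hbnn : 0 ≤ Xr - α) (hαS : α ≤ σ1^2*S) (hSf : Sf ≤ α/S) :
    α/S - 2*((α/s)^2)/Xr + Sf ≤ 2*σ1^2*(Xr-α)/Xr := by
  have hsq : (α/s)^2 = α^2/S := by rw [div_pow, hs2]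
  have h2 : 2*(α/S) - 2*α^2/(S*Xr) = 2*α*(Xr-α)/(S*Xr) := by
    field_simp
  have h3 : 2*α*(Xr-α)/(S*Xr) ≤ 2*σ1^2*(Xr-α)/Xr := by
    rw [div_le_div_iff₀ (mul_pos hS0 hXr0) hXr0]
    nlinarith [mul_nonneg (mul_nonneg hbnn (sub_nonneg.mpr hαS)) hXr0.le]
  have h4 : 2*((α/s)^2)/Xr = 2*α^2/(S*Xr) := by
    rw [hsq]
    field_simp
  linarith

theorem rplu_case2_bound {n m : ℕ} (k : ℕ) (A : Matrix (Fin n) (Fin m) ℂ) (hA : A ≠ 0)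
    (μ : Fin m → ℝ) (hμanti : Antitone μ)
    (v : Fin m → Fin m → ℂ)
    (horth : ∀ a b, (∑ t, (starRingEnd ℂ) (v a t) * v b t) = if a = b then 1 else 0)
    (heig : ∀ a, (Aᴴ * A).mulVec (v a) = (μ a : ℂ) • v a)
    (P : Matrix (Fin m) (Fin m) ℂ)
    (hP : P = ∑ a ∈ Finset.univ.filter (fun a : Fin m => (a : ℕ) < k),
        Matrix.vecMulVec (v a) (fun t => (starRingEnd ℂ) (v a t)))
    (c : Fin m)
    (σ1 : ℝ) (hσ1 : 0 ≤ σ1) (hσ1sq : σ1 ^ 2 = μ ⟨0, c.pos⟩)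
    (hPc : P.mulVec (Pi.single c 1) ≠ 0)
    (hAc : A.mulVec (Pi.single c 1) ≠ 0)
    (g : Fin m → ℂ)
    (hg : g = (Real.sqrt (∑ t, ‖P.mulVec (Pi.single c 1) t‖ ^ 2) : ℂ)⁻¹ •
        P.mulVec (Pi.single c 1)) :
    (∑ i ∈ Finset.univ.filter (fun i : Fin n => A i c ≠ 0),
        (‖A i c‖ ^ 2 / ∑ a, ‖A a c‖ ^ 2) *
          (dotProduct (star g)
            (((A - (A i c)⁻¹ • (A * Matrix.single c i (1 : ℂ) * A))ᴴ *
                (A - (A i c)⁻¹ • (A * Matrix.single c i (1 : ℂ) * A))).mulVec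
              g)).re)
      ≤ 2 * σ1 ^ 2 *
          (∑ t, ‖A.mulVec ((1 - P).mulVec (Pi.single c 1)) t‖ ^ 2) /
          (∑ a, ‖A a c‖ ^ 2) := by
  classical
  set e : Fin m → ℂ := Pi.single c 1 with he
  set x : Fin n → ℂ := A.mulVec e with hxdef
  have hxi : ∀ i, x i = A i c := fun i => by
    rw [hxdef, he, Matrix.mulVec_single]; exact mul_one _
  set Xr : ℝ := ∑ a, ‖A a c‖^2 with hXrdef
  have hXx : ∑ j, ‖x j‖^2 = Xr := by
    rw [hXrdef]; exact Finset.sum_congr rfl fun j _ => by rw [hxi]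
  have hXr0 : 0 < Xr := by
    obtain ⟨i, hi⟩ := Function.ne_iff.mp hAc
    rw [← hXx]
    have h1 : 0 < ‖x i‖^2 := pow_pos (norm_pos_iff.mpr hi) 2
    exact lt_of_lt_of_le h1 (Finset.single_le_sum (f := fun j => ‖x j‖^2)
      (fun j _ => by positivity) (Finset.mem_univ i))
  set p : Fin m → ℂ := P.mulVec e with hpdef
  set S : ℝ := ∑ t, ‖p t‖^2 with hSdef
  have hS0 : 0 < S := by
    obtain ⟨t, ht⟩ := Function.ne_iff.mp hPc
    rw [hSdef]
    have h1 : 0 < ‖p t‖^2 := pow_pos (norm_pos_iff.mpr ht) 2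
    exact lt_of_lt_of_le h1 (Finset.single_le_sum (f := fun j => ‖p j‖^2)
      (fun j _ => by positivity) (Finset.mem_univ t))
  set s : ℝ := Real.sqrt S with hsdef
  have hs0 : 0 < s := Real.sqrt_pos.mpr hS0
  have hs2 : s^2 = S := Real.sq_sqrt hS0.le
  set F : Finset (Fin n) := Finset.univ.filter (fun i : Fin n => A i c ≠ 0) with hFdef
  set K : Finset (Fin m) := Finset.univ.filter (fun a : Fin m => (a : ℕ) < k) with hKdef
  set d : Fin m → ℂ := fun a => (starRingEnd ℂ) (v a c) with hddef
  have hvv : ∀ a b, dotProduct (star (v a)) (v b) = if a = b then 1 else 0 := by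
    intro a b
    simpa [dotProduct, Complex.star_def] using horth a b
  -- p as eigenvector combination
  have hp1 : p = ∑ a ∈ K, d a • v a := by
    rw [hpdef, hP, sum_mulVec']
    refine Finset.sum_congr rfl fun a _ => ?_
    rw [vecMulVec_mulVec', he, dotProduct_single, mul_one]
  set α : ℝ := ∑ a ∈ K, μ a * ‖v a c‖^2 with hαdef
  have hda : ∀ a : Fin m, (starRingEnd ℂ) (d a) * d a = ((‖v a c‖^2 : ℝ) : ℂ) := by
    intro a
    rw [conj_mul_self' (d a), hddef]
    norm_num
  -- value of S
  have hSval : S = ∑ a ∈ K, ‖v a c‖^2 := by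
    have h1 : dotProduct (star p) p = ((∑ a ∈ K, ‖v a c‖^2 : ℝ) : ℂ) := by
      rw [hp1, expand_dot v hvv K d d]
      rw [show ((∑ a ∈ K, ‖v a c‖^2 : ℝ) : ℂ) = ∑ a ∈ K, ((‖v a c‖^2 : ℝ) : ℂ) by
        push_cast; rfl]
      exact Finset.sum_congr rfl fun a _ => hda a
    have h2 := star_dot_self p
    rw [h1] at h2
    exact_mod_cast (Complex.ofReal_inj.mp h2).symm
  -- G p expansion
  have hGp : (Aᴴ * A).mulVec p = ∑ a ∈ K, (d a * (μ a : ℂ)) • v a := by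
    rw [hp1, mulVec_sumv]
    refine Finset.sum_congr rfl fun a _ => ?_
    rw [Matrix.mulVec_smul, heig a, smul_smul]
  -- α as quadratic form
  have hαq : dotProduct (star p) ((Aᴴ * A).mulVec p) = ((α : ℝ) : ℂ) := by
    rw [hGp, hp1, expand_dot v hvv K d (fun a => d a * (μ a : ℂ))]
    rw [hαdef, show ((∑ a ∈ K, μ a * ‖v a c‖^2 : ℝ) : ℂ)
        = ∑ a ∈ K, ((μ a : ℂ) * ((‖v a c‖^2 : ℝ) : ℂ)) by push_cast; rfl]
    refine Finset.sum_congr rfl fun a _ => ?_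
    rw [show (starRingEnd ℂ) (d a) * (d a * (μ a : ℂ))
        = ((starRingEnd ℂ) (d a) * d a) * (μ a : ℂ) by ring, hda a]
    ring
  set q : Fin n → ℂ := A.mulVec p with hqdef
  have hqq : dotProduct (star q) q = ((α : ℝ) : ℂ) := by
    rw [hqdef, ← gram_dot A p p, hαq]
  have hqα : ∑ t, ‖q t‖^2 = α := by
    have h2 := star_dot_self q
    rw [hqq] at h2
    exact_mod_cast (Complex.ofReal_inj.mp h2.symm)
  have hα0 : 0 ≤ α := by
    rw [← hqα]; exact Finset.sum_nonneg fun t _ => pow_nonneg (norm_nonneg _) 2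
  have hstare : star e = e := by
    rw [he]; ext t
    rcases eq_or_ne c t with h | h
    · subst h; simp
    · simp [Pi.single_apply, Ne.symm h]
  have hZ0 : dotProduct (star x) q = ((α : ℝ) : ℂ) := by
    rw [hxdef, hqdef, ← gram_dot A e p, hGp, dot_sum', hstare]
    rw [hαdef, show ((∑ a ∈ K, μ a * ‖v a c‖^2 : ℝ) : ℂ)
        = ∑ a ∈ K, ((μ a : ℂ) * ((‖v a c‖^2 : ℝ) : ℂ)) by push_cast; rfl]
    refine Finset.sum_congr rfl fun a _ => ?_
    rw [dotProduct_smul, he, single_dotProduct, one_mul, smul_eq_mul]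
    rw [show d a * (μ a : ℂ) * v a c = ((starRingEnd ℂ) (v a c) * v a c) * (μ a : ℂ) by
      rw [hddef]; ring, conj_mul_self' (v a c)]
    ring
  have hxx : dotProduct (star x) x = ((Xr : ℝ) : ℂ) := by
    rw [star_dot_self, hXx]
  -- the residual norm
  have hbval : (∑ t, ‖A.mulVec ((1 - P).mulVec e) t‖^2) = Xr - α := by
    have hPe : (1 - P).mulVec e = e - p := by
      rw [Matrix.sub_mulVec, Matrix.one_mulVec, hpdef]
    rw [hPe, Matrix.mulVec_sub]
    have h1 : dotProduct (star (A.mulVec e - A.mulVec p)) (A.mulVec e - A.mulVec p)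
        = ((Xr - α : ℝ) : ℂ) := by
      rw [← hxdef, ← hqdef, star_sub, sub_dotProduct, dotProduct_sub,
        dotProduct_sub, hxx, hZ0, hqq]
      have hqx : dotProduct (star q) x = ((α : ℝ) : ℂ) := by
        rw [Matrix.star_dotProduct, hZ0]
        simp [Complex.star_def, Complex.conj_ofReal]
      rw [hqx]; push_cast; ring
    have h2 := star_dot_self (A.mulVec e - A.mulVec p)
    rw [h1] at h2
    exact_mod_cast (Complex.ofReal_inj.mp h2.symm)
  have hbnn : 0 ≤ Xr - α := by
    rw [← hbval]; exact Finset.sum_nonneg fun t _ => pow_nonneg (norm_nonneg _) 2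
  have hαS : α ≤ σ1^2 * S := by
    rw [hσ1sq, hSval, Finset.mul_sum, hαdef]
    refine Finset.sum_le_sum fun a _ => ?_
    have hle : μ a ≤ μ ⟨0, c.pos⟩ := hμanti (by simp [Fin.le_def])
    exact mul_le_mul_of_nonneg_right hle (by positivity)
  -- normalized quantities
  have hsC : ((s : ℝ) : ℂ) ≠ 0 := Complex.ofReal_ne_zero.mpr hs0.ne'
  have hXC : ((Xr : ℝ) : ℂ) ≠ 0 := Complex.ofReal_ne_zero.mpr hXr0.ne'
  set y : Fin n → ℂ := ((s : ℝ) : ℂ)⁻¹ • q with hydef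
  have hy : A.mulVec g = y := by
    rw [hg, Matrix.mulVec_smul, hydef, hqdef, hpdef]
  have hZ : dotProduct (star x) y = ((α / s : ℝ) : ℂ) := by
    rw [hydef, dotProduct_smul, hZ0, smul_eq_mul]
    push_cast
    ring
  have hyx : dotProduct (star y) x = ((α / s : ℝ) : ℂ) := by
    rw [Matrix.star_dotProduct, hZ]
    simp [Complex.star_def, Complex.conj_ofReal]
  have hY : dotProduct (star y) y = ((α / S : ℝ) : ℂ) := by
    rw [hydef, star_smul, smul_dotProduct, dotProduct_smul, hqq]
    simp only [smul_eq_mul, Complex.star_def, map_inv₀, Complex.conj_ofReal]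
    rw [← hs2]
    push_cast
    ring
  have hYr : ∑ j, ‖y j‖^2 = α / S := by
    have h2 := star_dot_self y
    rw [hY] at h2
    exact_mod_cast Complex.ofReal_inj.mp h2.symm
  -- expansion of the quadratic form at a shifted vector
  have hexp : ∀ t : ℂ, dotProduct (star (y - t • x)) (y - t • x)
      = ((α/S : ℝ) : ℂ) - t * ((α/s : ℝ) : ℂ) - (starRingEnd ℂ) t * ((α/s : ℝ) : ℂ)
        + (starRingEnd ℂ) t * t * ((Xr : ℝ) : ℂ) := by
    intro t
    simp only [star_sub, star_smul, sub_dotProduct, dotProduct_sub,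
      smul_dotProduct, dotProduct_smul, smul_eq_mul]
    rw [hY, hZ, hyx, hxx]
    simp only [Complex.star_def]
    ring
  have hsingle : ∀ z : ℂ, Pi.single c z = z • e := by
    intro z; rw [he]; ext t
    rcases eq_or_ne c t with h | h
    · subst h; simp
    · simp [Pi.single_apply, Ne.symm h]
  set T : Fin n → ℂ := fun i => (A i c)⁻¹ * y i with hTdef
  have hBg : ∀ i : Fin n,
      (A - (A i c)⁻¹ • (A * Matrix.single c i (1:ℂ) * A)).mulVec g
        = y - T i • x := by
    intro i
    rw [Matrix.sub_mulVec, Matrix.smul_mulVec, ← Matrix.mulVec_mulVec,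
      ← Matrix.mulVec_mulVec, hy, stdBasis_mulVec', hsingle (y i), Matrix.mulVec_smul,
      ← hxdef, smul_smul]
  set Sf : ℝ := ∑ i ∈ F, ‖y i‖^2 with hSfdef
  have hterm : ∀ i ∈ F,
      dotProduct (star g)
        (((A - (A i c)⁻¹ • (A * Matrix.single c i (1:ℂ) * A))ᴴ *
          (A - (A i c)⁻¹ • (A * Matrix.single c i (1:ℂ) * A))).mulVec g)
      = ((α/S : ℝ) : ℂ) - T i * ((α/s : ℝ) : ℂ)
          - (starRingEnd ℂ) (T i) * ((α/s : ℝ) : ℂ)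
          + (starRingEnd ℂ) (T i) * T i * ((Xr : ℝ) : ℂ) := by
    intro i _
    rw [gram_dot, hBg i]
    exact hexp (T i)
  -- the four weighted sums
  have hsumF : ∑ i ∈ F, ‖A i c‖^2 = Xr := by
    rw [hXrdef, hFdef]
    exact Finset.sum_filter_of_ne fun i _ hne h0 => hne (by rw [h0]; simp)
  have hC1 : ∑ i ∈ F, ((‖A i c‖^2 / Xr : ℝ) : ℂ) = 1 := by
    have h1 : (∑ i ∈ F, ‖A i c‖^2 / Xr) = 1 := by
      rw [← Finset.sum_div, hsumF, div_self hXr0.ne']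
    rw [show (∑ i ∈ F, ((‖A i c‖^2 / Xr : ℝ) : ℂ))
        = ((∑ i ∈ F, ‖A i c‖^2 / Xr : ℝ) : ℂ) by push_cast; rfl, h1]
    norm_num
  have hmemF : ∀ i ∈ F, A i c ≠ 0 := by
    intro i hi
    rw [hFdef] at hi
    simpa using (Finset.mem_filter.mp hi).2
  have hZsum : ∑ i, (starRingEnd ℂ) (A i c) * y i = ((α/s : ℝ) : ℂ) := by
    rw [← hZ]
    simp only [dotProduct, Pi.star_apply, Complex.star_def]
    exact Finset.sum_congr rfl fun i _ => by rw [hxi]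
  have hZsum' : ∑ i, A i c * (starRingEnd ℂ) (y i) = ((α/s : ℝ) : ℂ) := by
    rw [← hyx]
    simp only [dotProduct, Pi.star_apply, Complex.star_def]
    exact Finset.sum_congr rfl fun i _ => by rw [hxi]; ring
  have hC2 : ∑ i ∈ F, ((‖A i c‖^2 / Xr : ℝ) : ℂ) * T i
      = ((Xr : ℝ) : ℂ)⁻¹ * ((α/s : ℝ) : ℂ) := by
    have hstep : ∀ i ∈ F, ((‖A i c‖^2 / Xr : ℝ) : ℂ) * T i
        = ((Xr : ℝ) : ℂ)⁻¹ * ((starRingEnd ℂ) (A i c) * y i) := by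
      intro i hi
      have hz : A i c ≠ 0 := hmemF i hi
      simp only [hTdef]
      rw [Complex.ofReal_div, ← conj_mul_self' (A i c)]
      field_simp
    rw [Finset.sum_congr rfl hstep, ← Finset.mul_sum]
    congr 1
    rw [← hZsum, hFdef]
    exact Finset.sum_filter_of_ne fun i _ hne h0 => hne (by rw [h0]; simp)
  have hC3 : ∑ i ∈ F, ((‖A i c‖^2 / Xr : ℝ) : ℂ) * (starRingEnd ℂ) (T i)
      = ((Xr : ℝ) : ℂ)⁻¹ * ((α/s : ℝ) : ℂ) := by
    have hstep : ∀ i ∈ F, ((‖A i c‖^2 / Xr : ℝ) : ℂ) * (starRingEnd ℂ) (T i)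
        = ((Xr : ℝ) : ℂ)⁻¹ * (A i c * (starRingEnd ℂ) (y i)) := by
      intro i hi
      have hz : A i c ≠ 0 := hmemF i hi
      have hzc : (starRingEnd ℂ) (A i c) ≠ 0 := fun h => hz (by
        have h2 := congrArg (starRingEnd ℂ) h
        simpa using h2)
      simp only [hTdef, _root_.map_mul, map_inv₀]
      rw [Complex.ofReal_div, ← conj_mul_self' (A i c)]
      field_simp
    rw [Finset.sum_congr rfl hstep, ← Finset.mul_sum]
    congr 1
    rw [← hZsum', hFdef]
    exact Finset.sum_filter_of_ne fun i _ hne h0 => hne (by rw [h0]; simp)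
  have hC4 : ∑ i ∈ F, ((‖A i c‖^2 / Xr : ℝ) : ℂ) * ((starRingEnd ℂ) (T i) * T i)
      = ((Sf / Xr : ℝ) : ℂ) := by
    have hstep : ∀ i ∈ F, ((‖A i c‖^2 / Xr : ℝ) : ℂ) * ((starRingEnd ℂ) (T i) * T i)
        = ((‖y i‖^2 / Xr : ℝ) : ℂ) := by
      intro i hi
      have hz : A i c ≠ 0 := hmemF i hi
      have hzn : ‖A i c‖ ≠ 0 := norm_ne_zero_iff.mpr hz
      simp only [hTdef]
      rw [conj_mul_self' ((A i c)⁻¹ * y i), ← Complex.ofReal_mul]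
      congr 1
      rw [norm_mul, norm_inv, mul_pow, inv_pow]
      rw [div_mul_eq_mul_div]
      rw [show ‖A i c‖^2 * ((‖A i c‖^2)⁻¹ * ‖y i‖^2) = ‖y i‖^2 from by
        rw [← mul_assoc, mul_inv_cancel₀ (pow_ne_zero 2 hzn), one_mul]]
    rw [Finset.sum_congr rfl hstep,
      show ((Sf / Xr : ℝ) : ℂ) = ∑ i ∈ F, ((‖y i‖^2 / Xr : ℝ) : ℂ) by
        rw [hSfdef, Finset.sum_div]; push_cast; rfl]
  -- splitting of the weighted complex sum
  have hsplit : ∑ i ∈ F, ((‖A i c‖^2 / Xr : ℝ) : ℂ) *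
        (((α/S : ℝ) : ℂ) - T i * ((α/s : ℝ) : ℂ)
          - (starRingEnd ℂ) (T i) * ((α/s : ℝ) : ℂ)
          + (starRingEnd ℂ) (T i) * T i * ((Xr : ℝ) : ℂ))
      = (∑ i ∈ F, ((‖A i c‖^2 / Xr : ℝ) : ℂ)) * ((α/S : ℝ) : ℂ)
        - (∑ i ∈ F, ((‖A i c‖^2 / Xr : ℝ) : ℂ) * T i) * ((α/s : ℝ) : ℂ)
        - (∑ i ∈ F, ((‖A i c‖^2 / Xr : ℝ) : ℂ) * (starRingEnd ℂ) (T i)) * ((α/s : ℝ) : ℂ)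
        + (∑ i ∈ F, ((‖A i c‖^2 / Xr : ℝ) : ℂ) * ((starRingEnd ℂ) (T i) * T i))
            * ((Xr : ℝ) : ℂ) := by
    rw [Finset.sum_mul, Finset.sum_mul, Finset.sum_mul, Finset.sum_mul,
      ← Finset.sum_sub_distrib, ← Finset.sum_sub_distrib, ← Finset.sum_add_distrib]
    exact Finset.sum_congr rfl fun i _ => by ring
  have hW : (∑ i ∈ F, ((‖A i c‖^2 / Xr : ℝ) : ℂ) *
        (((α/S : ℝ) : ℂ) - T i * ((α/s : ℝ) : ℂ)
          - (starRingEnd ℂ) (T i) * ((α/s : ℝ) : ℂ)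
          + (starRingEnd ℂ) (T i) * T i * ((Xr : ℝ) : ℂ)))
      = ((α/S - 2*((α/s)^2)/Xr + Sf : ℝ) : ℂ) := by
    rw [hsplit, hC1, hC2, hC3, hC4]
    rw [show (α/S - 2*((α/s)^2)/Xr + Sf : ℝ)
        = α/S - (α/s)*(α/s)/Xr - (α/s)*(α/s)/Xr + (Sf/Xr)*Xr from by
      rw [div_mul_cancel₀ _ hXr0.ne']; ring]
    push_cast
    ring
  -- put the left-hand side in closed form
  have hmain : (∑ i ∈ F,
        (‖A i c‖ ^ 2 / Xr) *
          (dotProduct (star g)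
            (((A - (A i c)⁻¹ • (A * Matrix.single c i (1 : ℂ) * A))ᴴ *
                (A - (A i c)⁻¹ • (A * Matrix.single c i (1 : ℂ) * A))).mulVec
              g)).re)
      = α/S - 2*((α/s)^2)/Xr + Sf := by
    have e1 : ∀ i ∈ F,
        (‖A i c‖ ^ 2 / Xr) *
          (dotProduct (star g)
            (((A - (A i c)⁻¹ • (A * Matrix.single c i (1 : ℂ) * A))ᴴ *
                (A - (A i c)⁻¹ • (A * Matrix.single c i (1 : ℂ) * A))).mulVec
              g)).re
        = (((‖A i c‖^2 / Xr : ℝ) : ℂ) *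
            (((α/S : ℝ) : ℂ) - T i * ((α/s : ℝ) : ℂ)
              - (starRingEnd ℂ) (T i) * ((α/s : ℝ) : ℂ)
              + (starRingEnd ℂ) (T i) * T i * ((Xr : ℝ) : ℂ))).re := by
      intro i hi
      rw [hterm i hi, Complex.re_ofReal_mul]
    rw [Finset.sum_congr rfl e1, ← Complex.re_sum, hW, Complex.ofReal_re]
  rw [hbval, hmain]
  exact rplu_arith α S Xr s Sf σ1 hS0 hXr0 hs2 hbnn hαS (by
    rw [hSfdef, ← hYr, hFdef]
    exact Finset.sum_le_sum_of_subset_of_nonneg (Finset.filter_subset _ _)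
      fun i _ _ => pow_nonneg (norm_nonneg _) 2)
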